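/- Let r ∈ C²((0,1]) ∩ C([0,1]) with r'(R) > 0 on (0,1] be a solution of the modified equilibrium equation (d/dR)[R^{n−1} Φ̂_{,1}(r(R))] = (n−1) R^{n−2} Φ̂_{,2}(r(R)) with r(1) = λ and r(0) = 0. Then r(R) = λR for all R ∈ [0,1]. -/

import Mathlib

open Real MeasureTheory Filter Set
open scoped ENNReal NNReal

noncomputable section

/-- Radial stored energy `Φ(q, v, …, v) = (κ/n)(qⁿ + (n−1)vⁿ) + h(q v^{n−1})`,
the restriction of `Φ(v₁,…,vₙ) = (κ/n)(v₁ⁿ+⋯+vₙⁿ) + h(v₁⋯vₙ)` to points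
`(q, v, …, v)`. -/
def Phi (n : ℕ) (κ : ℝ) (h : ℝ → ℝ) (q v : ℝ) : ℝ :=
  (κ / n) * (q ^ n + ((n : ℝ) - 1) * v ^ n) + h (q * v ^ (n - 1))

/-- `Φ_{,1}(q, v, …, v) = κ q^{n−1} + v^{n−1} h'(q v^{n−1})`. -/
def Phi1 (n : ℕ) (κ : ℝ) (h' : ℝ → ℝ) (q v : ℝ) : ℝ :=
  κ * q ^ (n - 1) + v ^ (n - 1) * h' (q * v ^ (n - 1))

/-- `Φ_{,2}(q, v, …, v) = κ v^{n−1} + q v^{n−2} h'(q v^{n−1})`. -/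
def Phi2 (n : ℕ) (κ : ℝ) (h' : ℝ → ℝ) (q v : ℝ) : ℝ :=
  κ * v ^ (n - 1) + q * v ^ (n - 2) * h' (q * v ^ (n - 1))

/-- Radial Cauchy stress `T(q,v) = v^{1−n} Φ_{,1}(q,v,…,v) = κ(q/v)^{n−1} + h'(q v^{n−1})`. -/
def Tstress (n : ℕ) (κ : ℝ) (h' : ℝ → ℝ) (q v : ℝ) : ℝ :=
  κ * (q / v) ^ (n - 1) + h' (q * v ^ (n - 1))

/-- The determinant function `δ(R) = r'(R) (r(R)/R)^{n−1}`. -/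
def del (n : ℕ) (r r' : ℝ → ℝ) (R : ℝ) : ℝ :=
  r' R * (r R / R) ^ (n - 1)

/-- Hypotheses on `h : (0,∞) → [0,∞)`: it is `C²` with derivative `h'` and second
derivative `h''`, `h'' > 0`, `h(d) → ∞` as `d → 0⁺`, `h(d)/d → ∞` as `d → ∞`,
`h'(d) → −∞` as `d → 0⁺` and `h'(d) → ∞` as `d → ∞`. -/
structure GoodH (h h' h'' : ℝ → ℝ) : Prop where
  nonneg : ∀ d : ℝ, 0 < d → 0 ≤ h d
  deriv1 : ∀ d : ℝ, 0 < d → HasDerivAt h (h' d) d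
  deriv2 : ∀ d : ℝ, 0 < d → HasDerivAt h' (h'' d) d
  cont2 : ContinuousOn h'' (Set.Ioi 0)
  hpp_pos : ∀ d : ℝ, 0 < d → 0 < h'' d
  lim_zero : Tendsto h (nhdsWithin 0 (Set.Ioi 0)) atTop
  lim_growth : Tendsto (fun d => h d / d) atTop atTop
  dlim_zero : Tendsto h' (nhdsWithin 0 (Set.Ioi 0)) atBot
  dlim_top : Tendsto h' atTop atTop

/-- `r ∈ C²((0,1])`, with `r, r' > 0` on `(0,1]`, solving the radial equilibrium
equation `(d/dR)[R^{n−1} Φ_{,1}(r(R))] = (n−1) R^{n−2} Φ_{,2}(r(R))`. -/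
structure RadialSol (n : ℕ) (κ : ℝ) (h' : ℝ → ℝ) (r r' r'' : ℝ → ℝ) : Prop where
  pos : ∀ R ∈ Set.Ioc (0:ℝ) 1, 0 < r R
  derivPos : ∀ R ∈ Set.Ioc (0:ℝ) 1, 0 < r' R
  hasDeriv : ∀ R ∈ Set.Ioc (0:ℝ) 1, HasDerivWithinAt r (r' R) (Set.Ioc 0 1) R
  hasDeriv2 : ∀ R ∈ Set.Ioc (0:ℝ) 1, HasDerivWithinAt r' (r'' R) (Set.Ioc 0 1) R
  cont2 : ContinuousOn r'' (Set.Ioc 0 1)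
  equil : ∀ R ∈ Set.Ioc (0:ℝ) 1,
    HasDerivWithinAt (fun s => s ^ (n - 1) * Phi1 n κ h' (r' s) (r s / s))
      (((n : ℝ) - 1) * R ^ (n - 2) * Phi2 n κ h' (r' R) (r R / R)) (Set.Ioc 0 1) R


/-- Modified radial stored energy
`Φ̂(q,v,…,v) = (κ/n)qⁿ + h(q v^{n−1}) + κ q v^{n−1}((n−1)/n + ln(v^{n−1}))`. -/
def PhiHat (n : ℕ) (κ : ℝ) (h : ℝ → ℝ) (q v : ℝ) : ℝ :=
  (κ / n) * q ^ n + h (q * v ^ (n - 1)) +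
    κ * (q * v ^ (n - 1)) * (((n : ℝ) - 1) / n + ((n : ℝ) - 1) * Real.log v)

/-- `Φ̂_{,1}(q,v,…,v) = κ q^{n−1} + v^{n−1} h'(q v^{n−1}) + κ v^{n−1}((n−1)/n + (n−1) ln v)`. -/
def PhiHat1 (n : ℕ) (κ : ℝ) (h' : ℝ → ℝ) (q v : ℝ) : ℝ :=
  κ * q ^ (n - 1) + v ^ (n - 1) * h' (q * v ^ (n - 1)) +
    κ * v ^ (n - 1) * (((n : ℝ) - 1) / n + ((n : ℝ) - 1) * Real.log v)

/-- `Φ̂_{,2}(q,v,…,v) = q v^{n−2}(h'(q v^{n−1}) + κ + κ(n−1)(1/n + ln v))`. -/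
def PhiHat2 (n : ℕ) (κ : ℝ) (h' : ℝ → ℝ) (q v : ℝ) : ℝ :=
  q * v ^ (n - 2) *
    (h' (q * v ^ (n - 1)) + κ + κ * (((n : ℝ) - 1) * (1 / n + Real.log v)))

/-- Modified radial Cauchy stress
`T̂(q,v) = κ(q/v)^{n−1} + h'(q v^{n−1}) + (n−1)κ(1/n + ln v)`. -/
def THat (n : ℕ) (κ : ℝ) (h' : ℝ → ℝ) (q v : ℝ) : ℝ :=
  κ * (q / v) ^ (n - 1) + h' (q * v ^ (n - 1)) +
    ((n : ℝ) - 1) * κ * (1 / n + Real.log v)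

/-- `r ∈ C²((0,1])`, with `r, r' > 0` on `(0,1]`, solving the modified radial
equilibrium equation `(d/dR)[R^{n−1} Φ̂_{,1}(r(R))] = (n−1) R^{n−2} Φ̂_{,2}(r(R))`. -/
structure ModRadialSol (n : ℕ) (κ : ℝ) (h' : ℝ → ℝ) (r r' r'' : ℝ → ℝ) : Prop where
  pos : ∀ R ∈ Set.Ioc (0:ℝ) 1, 0 < r R
  derivPos : ∀ R ∈ Set.Ioc (0:ℝ) 1, 0 < r' R
  hasDeriv : ∀ R ∈ Set.Ioc (0:ℝ) 1, HasDerivWithinAt r (r' R) (Set.Ioc 0 1) R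
  hasDeriv2 : ∀ R ∈ Set.Ioc (0:ℝ) 1, HasDerivWithinAt r' (r'' R) (Set.Ioc 0 1) R
  cont2 : ContinuousOn r'' (Set.Ioc 0 1)
  equil : ∀ R ∈ Set.Ioc (0:ℝ) 1,
    HasDerivWithinAt (fun s => s ^ (n - 1) * PhiHat1 n κ h' (r' s) (r s / s))
      (((n : ℝ) - 1) * R ^ (n - 2) * PhiHat2 n κ h' (r' R) (r R / R)) (Set.Ioc 0 1) R


namespace Stmt14

lemma hpStrictMono {h h' h'' : ℝ → ℝ} (hh : GoodH h h' h'') : StrictMonoOn h' (Set.Ioi 0) := by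
  apply strictMonoOn_of_deriv_pos (convex_Ioi 0)
  · exact fun d hd => (hh.deriv2 d hd).continuousAt.continuousWithinAt
  · intro d hd
    rw [interior_Ioi] at hd
    rw [(hh.deriv2 d hd).deriv]
    exact hh.hpp_pos d hd

/-- there is `d₀ > 0` with `h' < 0` on `(0, d₀]` -/
lemma exists_d0 {h h' h'' : ℝ → ℝ} (hh : GoodH h h' h'') :
    ∃ d₀ : ℝ, 0 < d₀ ∧ ∀ d : ℝ, 0 < d → d ≤ d₀ → h' d < 0 := by
  have : ∀ᶠ d in nhdsWithin 0 (Set.Ioi 0), h' d < 0 :=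
    hh.dlim_zero.eventually (eventually_lt_atBot 0)
  obtain ⟨ε, hε, hb⟩ := Metric.mem_nhdsWithin_iff.mp this
  refine ⟨ε/2, by linarith, fun d hd hd2 => ?_⟩
  exact hb ⟨by rw [Metric.mem_ball, Real.dist_eq, abs_of_pos (by linarith)]; linarith, hd⟩

section Sol

variable {n : ℕ} {κ : ℝ} {h h' h'' : ℝ → ℝ} {r r' r'' : ℝ → ℝ}

lemma memIoc {R : ℝ} (hR : R ∈ Set.Ioo (0:ℝ) 1) : R ∈ Set.Ioc (0:ℝ) 1 := ⟨hR.1, hR.2.le⟩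

lemma nhd_Ioc {R : ℝ} (hR : R ∈ Set.Ioo (0:ℝ) 1) : Set.Ioc (0:ℝ) 1 ∈ nhds R :=
  Filter.mem_of_superset (isOpen_Ioo.mem_nhds hR) Set.Ioo_subset_Ioc_self

lemma r_hasDerivAt (hr : ModRadialSol n κ h' r r' r'') {R : ℝ} (hR : R ∈ Set.Ioo (0:ℝ) 1) :
    HasDerivAt r (r' R) R :=
  (hr.hasDeriv R (memIoc hR)).hasDerivAt (nhd_Ioc hR)

lemma v_hasDerivAt (hr : ModRadialSol n κ h' r r' r'') {R : ℝ} (hR : R ∈ Set.Ioo (0:ℝ) 1) :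
    HasDerivAt (fun s => r s / s) ((r' R * R - r R) / R ^ 2) R := by
  have := (r_hasDerivAt hr hR).div (hasDerivAt_id R) (ne_of_gt hR.1)
  exact this.congr_deriv (by simp)

lemma rp_contOn (hr : ModRadialSol n κ h' r r' r'') : ContinuousOn r' (Set.Ioc 0 1) :=
  fun R hR => (hr.hasDeriv2 R hR).continuousWithinAt

lemma r_contOn (hr : ModRadialSol n κ h' r r' r'') : ContinuousOn r (Set.Ioc 0 1) :=
  fun R hR => (hr.hasDeriv R hR).continuousWithinAt

lemma v_contOn (hr : ModRadialSol n κ h' r r' r'') :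
    ContinuousOn (fun s => r s / s) (Set.Ioc 0 1) :=
  (r_contOn hr).div (continuousOn_id) (fun R hR => ne_of_gt hR.1)

lemma v_pos (hr : ModRadialSol n κ h' r r' r'') {R : ℝ} (hR : R ∈ Set.Ioc (0:ℝ) 1) :
    0 < r R / R := div_pos (hr.pos R hR) hR.1

lemma del_pos (hr : ModRadialSol n κ h' r r' r'') {R : ℝ} (hR : R ∈ Set.Ioc (0:ℝ) 1) :
    0 < r' R * (r R / R) ^ (n - 1) :=
  mul_pos (hr.derivPos R hR) (pow_pos (v_pos hr hR) _)

/-- MVT: for every `R ∈ (0,1]` there is `ξ ∈ (0,R)` with `r'(ξ) = r(R)/R`. -/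
lemma mvt_point (hr : ModRadialSol n κ h' r r' r'')
    (hcont : ContinuousOn r (Set.Icc 0 1)) (h0 : r 0 = 0)
    {R : ℝ} (hR : R ∈ Set.Ioc (0:ℝ) 1) :
    ∃ ξ ∈ Set.Ioo (0:ℝ) R, r' ξ = r R / R := by
  have hc : ContinuousOn r (Set.Icc 0 R) :=
    hcont.mono (Set.Icc_subset_Icc le_rfl hR.2)
  have hd : ∀ x ∈ Set.Ioo (0:ℝ) R, HasDerivAt r (r' x) x := fun x hx =>
    r_hasDerivAt hr ⟨hx.1, lt_of_lt_of_le hx.2 hR.2⟩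
  obtain ⟨ξ, hξ, hs⟩ := exists_hasDerivAt_eq_slope r r' hR.1 hc hd
  refine ⟨ξ, hξ, ?_⟩
  rw [hs, h0]
  simp

lemma that_eq {n : ℕ} {κ : ℝ} {h' : ℝ → ℝ} {q a s : ℝ} (hs : 0 < s) (ha : 0 < a) :
    THat n κ h' q (a / s) = (s ^ (n - 1) * PhiHat1 n κ h' q (a / s)) / a ^ (n - 1) := by
  unfold THat PhiHat1
  have h1 : a ^ (n-1) ≠ 0 := pow_ne_zero _ ha.ne'
  have h2 : s ^ (n-1) ≠ 0 := pow_ne_zero _ hs.ne'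
  have hx : s ^ (n-1) * (a/s)^(n-1) = a^(n-1) := by rw [← mul_pow, mul_div_cancel₀ _ hs.ne']
  have hX0 : (a/s)^(n-1) ≠ 0 := pow_ne_zero _ (div_pos ha hs).ne'
  rw [div_pow q, ← hx]
  generalize (a/s)^(n-1) = X at hX0 ⊢
  field_simp

lemma psi_hasDerivAt (hr : ModRadialSol n κ h' r r' r'') {R : ℝ} (hR : R ∈ Set.Ioo (0:ℝ) 1)
    (hn : 2 ≤ n) :
    HasDerivAt (fun s => THat n κ h' (r' s) (r s / s))
      (((n:ℝ)-1) * κ * (r' R / r R) * (1 - (r' R * R / r R) ^ (n-1))) R := by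
  have hR0 : 0 < R := hR.1
  have ha : 0 < r R := hr.pos R (memIoc hR)
  have hq : 0 < r' R := hr.derivPos R (memIoc hR)
  have hP : HasDerivAt (fun s => s ^ (n-1) * PhiHat1 n κ h' (r' s) (r s / s))
      (((n:ℝ)-1) * R^(n-2) * PhiHat2 n κ h' (r' R) (r R / R)) R :=
    (hr.equil R (memIoc hR)).hasDerivAt (nhd_Ioc hR)
  have hQ : HasDerivAt (fun s => (r s)^(n-1)) (((n-1 : ℕ)) * (r R)^(n-1-1) * r' R) R :=
    (r_hasDerivAt hr hR).pow (n-1)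
  have hG := hP.div hQ (pow_ne_zero _ ha.ne')
  have hev : (fun s => THat n κ h' (r' s) (r s / s)) =ᶠ[nhds R]
      (fun s => (s ^ (n-1) * PhiHat1 n κ h' (r' s) (r s / s)) / (r s)^(n-1)) := by
    filter_upwards [isOpen_Ioo.mem_nhds hR] with s hs
    exact that_eq hs.1 (hr.pos s (memIoc hs))
  refine HasDerivAt.congr_of_eventuallyEq ?_ hev
  refine hG.congr_deriv ?_
  obtain ⟨k, rfl⟩ : ∃ k, n = k + 2 := ⟨n - 2, by omega⟩
  simp only [show k+2-1 = k+1 from rfl, show k+2-2 = k from rfl, show k+1-1 = k from rfl]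
  unfold PhiHat1 PhiHat2
  simp only [show k+2-1 = k+1 by omega, show k+2-2 = k by omega, show k+1-1 = k by omega]
  have hRn : R ≠ 0 := hR0.ne'
  have han : r R ≠ 0 := ha.ne'
  generalize h' (r' R * (r R / R) ^ (k + 1)) = H
  generalize Real.log (r R / R) = L
  have hv0 : r R / R ≠ 0 := div_ne_zero han hRn
  have hrv : r R = (r R / R) * R := by field_simp
  generalize r R / R = v at hv0 hrv ⊢
  rw [hrv]
  push_cast
  simp only [div_pow]
  field_simp
  ring

end Sol

/-- the radial Cauchy stress along the solution -/
def psiF (n : ℕ) (κ : ℝ) (h' r r' : ℝ → ℝ) : ℝ → ℝ := fun s => THat n κ h' (r' s) (r s / s)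

/-- `g(v(s))` where `g v = THat(v,v)` -/
def gF (n : ℕ) (κ : ℝ) (h' r : ℝ → ℝ) : ℝ → ℝ :=
  fun s => κ + h' ((r s / s) ^ n) + ((n:ℝ)-1) * κ * (1/(n:ℝ) + Real.log (r s / s))

/-- `F = ψ - g ∘ v`, whose sign is that of `r' R - r R / R` -/
def FF (n : ℕ) (κ : ℝ) (h' r r' : ℝ → ℝ) : ℝ → ℝ :=
  fun s => psiF n κ h' r r' s - gF n κ h' r s

/-- `Z = (ψ - (n-1)κ(1/n + ln v))·v^{n-1} = κ q^{n-1} + v^{n-1} h'(δ)` -/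
def ZF (n : ℕ) (κ : ℝ) (h' r r' : ℝ → ℝ) : ℝ → ℝ :=
  fun s => (psiF n κ h' r r' s - ((n:ℝ)-1) * κ * (1/(n:ℝ) + Real.log (r s / s)))
    * (r s / s) ^ (n - 1)

section Sol

variable {n : ℕ} {κ : ℝ} {h h' h'' : ℝ → ℝ} {r r' r'' : ℝ → ℝ}

lemma FF_eq (hr : ModRadialSol n κ h' r r' r'') {s : ℝ} (hs : s ∈ Set.Ioc (0:ℝ) 1) :
    FF n κ h' r r' s = κ * ((r' s / (r s / s)) ^ (n-1) - 1)
      + h' (r' s * (r s / s) ^ (n-1)) - h' ((r s / s) ^ n) := by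
  have hv : (0:ℝ) < r s / s := v_pos hr hs
  unfold FF psiF gF THat
  ring

lemma ZF_eq (hr : ModRadialSol n κ h' r r' r'') {s : ℝ} (hs : s ∈ Set.Ioc (0:ℝ) 1) :
    ZF n κ h' r r' s = κ * (r' s) ^ (n-1)
      + (r s / s) ^ (n-1) * h' (r' s * (r s / s) ^ (n-1)) := by
  have hv : (0:ℝ) < r s / s := v_pos hr hs
  have h1 : (r' s / (r s / s))^(n-1) * (r s / s)^(n-1) = r' s ^ (n-1) := by
    rw [← mul_pow, div_mul_cancel₀ _ hv.ne']
  have h2 : (psiF n κ h' r r' s - ((n:ℝ)-1) * κ * (1/(n:ℝ) + Real.log (r s / s)))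
      = κ * (r' s / (r s / s))^(n-1) + h' (r' s * (r s / s) ^ (n-1)) := by
    unfold psiF THat; ring
  unfold ZF
  rw [h2, add_mul, mul_assoc, h1, mul_comm (h' _)]

lemma log_hasDerivAt (hr : ModRadialSol n κ h' r r' r'') {R : ℝ} (hR : R ∈ Set.Ioo (0:ℝ) 1) :
    HasDerivAt (fun s => Real.log (r s / s))
      ((r R / R)⁻¹ * ((r' R * R - r R) / R ^ 2)) R := by
  have := (v_hasDerivAt hr hR).log (v_pos hr (memIoc hR)).ne'
  rwa [div_eq_inv_mul] at this

lemma gF_hasDerivAt (hh : GoodH h h' h'') (hr : ModRadialSol n κ h' r r' r'')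
    {R : ℝ} (hR : R ∈ Set.Ioo (0:ℝ) 1) :
    HasDerivAt (gF n κ h' r)
      (h'' ((r R/R)^n) * ((n:ℝ) * (r R/R)^(n-1) * ((r' R * R - r R) / R^2))
        + ((n:ℝ)-1) * κ * ((r R/R)⁻¹ * ((r' R * R - r R) / R^2))) R := by
  have hv : (0:ℝ) < r R / R := v_pos hr (memIoc hR)
  have hvn : HasDerivAt (fun s => (r s / s) ^ n)
      ((n:ℝ) * (r R / R)^(n-1) * ((r' R * R - r R) / R^2)) R := (v_hasDerivAt hr hR).pow n
  have hcomp := (hh.deriv2 _ (pow_pos hv n)).comp R hvn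
  have hlog := (log_hasDerivAt hr hR).const_add (1/(n:ℝ))
  have := ((hcomp.const_add κ).add (hlog.const_mul (((n:ℝ)-1)*κ)))
  unfold gF
  exact this

lemma FF_hasDerivAt (hh : GoodH h h' h'') (hr : ModRadialSol n κ h' r r' r'')
    {R : ℝ} (hR : R ∈ Set.Ioo (0:ℝ) 1) (hn : 2 ≤ n) :
    HasDerivAt (FF n κ h' r r')
      (((n:ℝ)-1) * κ * (r' R / r R) * (1 - (r' R * R / r R) ^ (n-1))
        - (h'' ((r R/R)^n) * ((n:ℝ) * (r R/R)^(n-1)) + ((n:ℝ)-1) * κ * (r R/R)⁻¹)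
          * ((r' R * R - r R) / R^2)) R := by
  have := (psi_hasDerivAt hr hR hn).sub (gF_hasDerivAt hh hr hR)
  unfold FF psiF
  exact this.congr_deriv (by ring)

lemma ZF_hasDerivAt (hh : GoodH h h' h'') (hr : ModRadialSol n κ h' r r' r'')
    {R : ℝ} (hR : R ∈ Set.Ioo (0:ℝ) 1) (hn : 2 ≤ n) :
    HasDerivAt (ZF n κ h' r r')
      (((n:ℝ)-1) * ((r R/R)^(n-1) / R) *
        (κ * (1 - (r' R * R / r R)^(n-1))
          + h' (r' R * (r R/R)^(n-1)) * (r' R * R / r R - 1))) R := by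
  have hR0 : 0 < R := hR.1
  have ha : 0 < r R := hr.pos R (memIoc hR)
  have hv : (0:ℝ) < r R / R := v_pos hr (memIoc hR)
  have hu : HasDerivAt (fun s => psiF n κ h' r r' s - ((n:ℝ)-1) * κ * (1/(n:ℝ) + Real.log (r s / s)))
      (((n:ℝ)-1) * κ * (r' R / r R) * (1 - (r' R * R / r R) ^ (n-1))
        - ((n:ℝ)-1) * κ * ((r R/R)⁻¹ * ((r' R * R - r R) / R^2))) R := by
    exact (psi_hasDerivAt hr hR hn).sub (((log_hasDerivAt hr hR).const_add (1/(n:ℝ))).const_mul (((n:ℝ)-1)*κ))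
  have hvp : HasDerivAt (fun s => (r s / s) ^ (n-1))
      (((n-1:ℕ):ℝ) * (r R / R)^(n-1-1) * ((r' R * R - r R) / R^2)) R := (v_hasDerivAt hr hR).pow (n-1)
  have := hu.mul hvp
  unfold ZF
  refine this.congr_deriv ?_
  obtain ⟨k, rfl⟩ : ∃ k, n = k + 2 := ⟨n - 2, by omega⟩
  simp only [show k+2-1 = k+1 from rfl, show k+1-1 = k from rfl]
  unfold psiF THat
  simp only [show k+2-1 = k+1 by omega, show k+1-1 = k by omega]
  have hRn : R ≠ 0 := hR0.ne'
  have han : r R ≠ 0 := ha.ne'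
  generalize h' (r' R * (r R / R) ^ (k + 1)) = H
  generalize Real.log (r R / R) = L
  have hv0 : r R / R ≠ 0 := div_ne_zero han hRn
  have hrv : r R = (r R / R) * R := by field_simp
  generalize r R / R = v at hv0 hrv ⊢
  rw [hrv]
  push_cast
  simp only [div_pow]
  field_simp
  ring

lemma FF_pos (hn : 2 ≤ n) (hκ : 0 < κ) (hh : GoodH h h' h'')
    (hr : ModRadialSol n κ h' r r' r'') {s : ℝ} (hs : s ∈ Set.Ioc (0:ℝ) 1)
    (hgt : r s < r' s * s) : 0 < FF n κ h' r r' s := by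
  have hv : (0:ℝ) < r s / s := v_pos hr hs
  have hq : 0 < r' s := hr.derivPos s hs
  have ht : 1 < r' s / (r s / s) := by
    rw [lt_div_iff₀ hv, one_mul, div_lt_iff₀ hs.1]; linarith
  have htp : 1 < (r' s / (r s / s)) ^ (n-1) := one_lt_pow₀ ht (by omega)
  have hδ : (r s / s) ^ n < r' s * (r s / s) ^ (n-1) := by
    have : (r s / s) ^ n = (r s / s) * (r s / s) ^ (n-1) := by
      rw [← pow_succ']; congr 1; omega
    rw [this]
    apply mul_lt_mul_of_pos_right _ (pow_pos hv _)
    rw [div_lt_iff₀ hs.1]; linarith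
  have hmono := hpStrictMono hh (Set.mem_Ioi.2 (pow_pos hv n))
      (Set.mem_Ioi.2 (mul_pos hq (pow_pos hv (n-1)))) hδ
  rw [FF_eq hr hs]
  nlinarith
lemma FF_neg (hn : 2 ≤ n) (hκ : 0 < κ) (hh : GoodH h h' h'')
    (hr : ModRadialSol n κ h' r r' r'') {s : ℝ} (hs : s ∈ Set.Ioc (0:ℝ) 1)
    (hlt : r' s * s < r s) : FF n κ h' r r' s < 0 := by
  have hv : (0:ℝ) < r s / s := v_pos hr hs
  have hq : 0 < r' s := hr.derivPos s hs
  have ht : r' s / (r s / s) < 1 := by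
    rw [div_lt_one hv, lt_div_iff₀ hs.1]; linarith
  have htp : (r' s / (r s / s)) ^ (n-1) < 1 := pow_lt_one₀ (by positivity) ht (by omega)
  have hδ : r' s * (r s / s) ^ (n-1) < (r s / s) ^ n := by
    have : (r s / s) ^ n = (r s / s) * (r s / s) ^ (n-1) := by
      rw [← pow_succ']; congr 1; omega
    rw [this]
    apply mul_lt_mul_of_pos_right _ (pow_pos hv _)
    rw [lt_div_iff₀ hs.1]; linarith
  have hmono := hpStrictMono hh (Set.mem_Ioi.2 (mul_pos hq (pow_pos hv (n-1))))
      (Set.mem_Ioi.2 (pow_pos hv n)) hδ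
  rw [FF_eq hr hs]
  nlinarith
lemma FF_zero (hn : 2 ≤ n) (hr : ModRadialSol n κ h' r r' r'') {s : ℝ}
    (hs : s ∈ Set.Ioc (0:ℝ) 1) (heq : r' s * s = r s) : FF n κ h' r r' s = 0 := by
  have hv : (0:ℝ) < r s / s := v_pos hr hs
  have hqv : r' s = r s / s := by field_simp [hs.1.ne']; linarith [heq]
  have hδ : r' s * (r s / s) ^ (n-1) = (r s / s) ^ n := by
    rw [hqv, ← pow_succ']; congr 1; omega
  rw [FF_eq hr hs, hδ, hqv, div_self hv.ne', one_pow]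
  ring
/-- converse sign: `F > 0` implies `r < r' ⋅ R` -/
lemma FF_pos_iff (hn : 2 ≤ n) (hκ : 0 < κ) (hh : GoodH h h' h'')
    (hr : ModRadialSol n κ h' r r' r'') {s : ℝ} (hs : s ∈ Set.Ioc (0:ℝ) 1) :
    0 < FF n κ h' r r' s ↔ r s < r' s * s := by
  constructor
  · intro hF
    rcases lt_trichotomy (r s) (r' s * s) with hc|hc|hc
    · exact hc
    · exact absurd (FF_zero hn hr hs hc.symm) (by linarith)
    · exact absurd (FF_neg hn hκ hh hr hs hc) (by linarith)
  · exact FF_pos hn hκ hh hr hs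
lemma FF_neg_iff (hn : 2 ≤ n) (hκ : 0 < κ) (hh : GoodH h h' h'')
    (hr : ModRadialSol n κ h' r r' r'') {s : ℝ} (hs : s ∈ Set.Ioc (0:ℝ) 1) :
    FF n κ h' r r' s < 0 ↔ r' s * s < r s := by
  constructor
  · intro hF
    rcases lt_trichotomy (r' s * s) (r s) with hc|hc|hc
    · exact hc
    · exact absurd (FF_zero hn hr hs hc) (by linarith)
    · exact absurd (FF_pos hn hκ hh hr hs hc) (by linarith)
  · exact FF_neg hn hκ hh hr hs

lemma hp_contOn (hh : GoodH h h' h'') : ContinuousOn h' (Set.Ioi 0) :=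
  fun d hd => (hh.deriv2 d hd).continuousAt.continuousWithinAt

lemma psi_contOn (hh : GoodH h h' h'') (hr : ModRadialSol n κ h' r r' r'') :
    ContinuousOn (psiF n κ h' r r') (Set.Ioc 0 1) := by
  unfold psiF THat
  apply ContinuousOn.add
  apply ContinuousOn.add
  · exact continuousOn_const.mul (((rp_contOn hr).div (v_contOn hr)
      (fun s hs => (v_pos hr hs).ne')).pow _)
  · exact (hp_contOn hh).comp ((rp_contOn hr).mul ((v_contOn hr).pow _))
      (fun s hs => Set.mem_Ioi.2 (del_pos hr hs))
  · exact continuousOn_const.mul (continuousOn_const.add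
      ((v_contOn hr).log (fun s hs => (v_pos hr hs).ne')))

lemma gF_contOn (hh : GoodH h h' h'') (hr : ModRadialSol n κ h' r r' r'') :
    ContinuousOn (gF n κ h' r) (Set.Ioc 0 1) := by
  unfold gF
  apply ContinuousOn.add
  apply ContinuousOn.add
  · exact continuousOn_const
  · exact (hp_contOn hh).comp ((v_contOn hr).pow _)
      (fun s hs => Set.mem_Ioi.2 (pow_pos (v_pos hr hs) _))
  · exact continuousOn_const.mul (continuousOn_const.add
      ((v_contOn hr).log (fun s hs => (v_pos hr hs).ne')))

lemma FF_contOn (hh : GoodH h h' h'') (hr : ModRadialSol n κ h' r r' r'') :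
    ContinuousOn (FF n κ h' r r') (Set.Ioc 0 1) :=
  (psi_contOn hh hr).sub (gF_contOn hh hr)

lemma ZF_contOn (hh : GoodH h h' h'') (hr : ModRadialSol n κ h' r r' r'') :
    ContinuousOn (ZF n κ h' r r') (Set.Ioc 0 1) := by
  unfold ZF
  exact ((psi_contOn hh hr).sub (continuousOn_const.mul (continuousOn_const.add
      ((v_contOn hr).log (fun s hs => (v_pos hr hs).ne'))))).mul ((v_contOn hr).pow _)

end Sol

section Mono

/-- strict anti helper on `Icc a b ⊆ Ioc 0 1` -/
lemma strictAntiOn_aux {f f' : ℝ → ℝ} {a b : ℝ} (ha : 0 < a) (hb : b ≤ 1) (hab : a < b)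
    (hc : ContinuousOn f (Set.Ioc 0 1))
    (hd : ∀ R ∈ Set.Ioo a b, HasDerivAt f (f' R) R)
    (hneg : ∀ R ∈ Set.Ioo a b, f' R < 0) :
    StrictAntiOn f (Set.Icc a b) := by
  apply strictAntiOn_of_deriv_neg (convex_Icc a b)
    (hc.mono (fun x hx => ⟨lt_of_lt_of_le ha hx.1, le_trans hx.2 hb⟩))
  intro x hx
  rw [interior_Icc] at hx
  rw [(hd x hx).deriv]
  exact hneg x hx

lemma strictMonoOn_aux {f f' : ℝ → ℝ} {a b : ℝ} (ha : 0 < a) (hb : b ≤ 1) (hab : a < b)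
    (hc : ContinuousOn f (Set.Ioc 0 1))
    (hd : ∀ R ∈ Set.Ioo a b, HasDerivAt f (f' R) R)
    (hpos : ∀ R ∈ Set.Ioo a b, 0 < f' R) :
    StrictMonoOn f (Set.Icc a b) := by
  apply strictMonoOn_of_deriv_pos (convex_Icc a b)
    (hc.mono (fun x hx => ⟨lt_of_lt_of_le ha hx.1, le_trans hx.2 hb⟩))
  intro x hx
  rw [interior_Icc] at hx
  rw [(hd x hx).deriv]
  exact hpos x hx

lemma antitoneOn_aux {f f' : ℝ → ℝ} {a b : ℝ} (ha : 0 < a) (hb : b ≤ 1) (hab : a < b)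
    (hc : ContinuousOn f (Set.Ioc 0 1))
    (hd : ∀ R ∈ Set.Ioo a b, HasDerivAt f (f' R) R)
    (hneg : ∀ R ∈ Set.Ioo a b, f' R ≤ 0) :
    AntitoneOn f (Set.Icc a b) := by
  apply antitoneOn_of_deriv_nonpos (convex_Icc a b)
    (hc.mono (fun x hx => ⟨lt_of_lt_of_le ha hx.1, le_trans hx.2 hb⟩))
  · intro x hx
    rw [interior_Icc] at hx
    exact (hd x hx).differentiableAt.differentiableWithinAt
  · intro x hx
    rw [interior_Icc] at hx
    rw [(hd x hx).deriv]
    exact hneg x hx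

lemma monotoneOn_aux {f f' : ℝ → ℝ} {a b : ℝ} (ha : 0 < a) (hb : b ≤ 1) (hab : a < b)
    (hc : ContinuousOn f (Set.Ioc 0 1))
    (hd : ∀ R ∈ Set.Ioo a b, HasDerivAt f (f' R) R)
    (hpos : ∀ R ∈ Set.Ioo a b, 0 ≤ f' R) :
    MonotoneOn f (Set.Icc a b) := by
  apply monotoneOn_of_deriv_nonneg (convex_Icc a b)
    (hc.mono (fun x hx => ⟨lt_of_lt_of_le ha hx.1, le_trans hx.2 hb⟩))
  · intro x hx
    rw [interior_Icc] at hx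
    exact (hd x hx).differentiableAt.differentiableWithinAt
  · intro x hx
    rw [interior_Icc] at hx
    rw [(hd x hx).deriv]
    exact hpos x hx

end Mono

section Prop1

variable {n : ℕ} {κ : ℝ} {h h' h'' : ℝ → ℝ} {r r' r'' : ℝ → ℝ}

lemma nR_pos (hn : 2 ≤ n) : (0:ℝ) < (n:ℝ) - 1 := by
  have : (2:ℝ) ≤ (n:ℝ) := by exact_mod_cast hn
  linarith

/-- derivative of F is negative where `r < r'·R` -/
lemma FFderiv_neg (hn : 2 ≤ n) (hκ : 0 < κ) (hh : GoodH h h' h'')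
    (hr : ModRadialSol n κ h' r r' r'') {x : ℝ} (hx : x ∈ Set.Ioo (0:ℝ) 1)
    (hgtx : r x < r' x * x) :
    ((n:ℝ)-1) * κ * (r' x / r x) * (1 - (r' x * x / r x) ^ (n-1))
      - (h'' ((r x/x)^n) * ((n:ℝ) * (r x/x)^(n-1)) + ((n:ℝ)-1) * κ * (r x/x)⁻¹)
        * ((r' x * x - r x) / x^2) < 0 := by
  have hx1 : x ∈ Set.Ioc (0:ℝ) 1 := memIoc hx
  have hax : 0 < r x := hr.pos x hx1
  have hqx : 0 < r' x := hr.derivPos x hx1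
  have hvx : 0 < r x / x := v_pos hr hx1
  have hn1 := nR_pos hn
  have ht : 1 < r' x * x / r x := (one_lt_div hax).2 hgtx
  have htp : 1 < (r' x * x / r x) ^ (n-1) := one_lt_pow₀ ht (by omega)
  have h1 : ((n:ℝ)-1) * κ * (r' x / r x) * (1 - (r' x * x / r x) ^ (n-1)) < 0 := by
    apply mul_neg_of_pos_of_neg (by positivity)
    linarith
  have h2 : 0 < (h'' ((r x/x)^n) * ((n:ℝ) * (r x/x)^(n-1)) + ((n:ℝ)-1) * κ * (r x/x)⁻¹)
      * ((r' x * x - r x) / x^2) := by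
    have hpp := hh.hpp_pos _ (pow_pos hvx n)
    have hnn : (0:ℝ) < (n:ℝ) := by linarith
    have hb1 : 0 < h'' ((r x/x)^n) * ((n:ℝ) * (r x/x)^(n-1)) :=
      mul_pos hpp (mul_pos hnn (pow_pos hvx _))
    have hb2 : 0 < ((n:ℝ)-1) * κ * (r x/x)⁻¹ :=
      mul_pos (mul_pos hn1 hκ) (inv_pos.2 hvx)
    apply mul_pos (by linarith)
    apply div_pos (by linarith) (pow_pos hx.1 2)
  linarith

lemma FFderiv_pos (hn : 2 ≤ n) (hκ : 0 < κ) (hh : GoodH h h' h'')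
    (hr : ModRadialSol n κ h' r r' r'') {x : ℝ} (hx : x ∈ Set.Ioo (0:ℝ) 1)
    (hltx : r' x * x < r x) :
    0 < ((n:ℝ)-1) * κ * (r' x / r x) * (1 - (r' x * x / r x) ^ (n-1))
      - (h'' ((r x/x)^n) * ((n:ℝ) * (r x/x)^(n-1)) + ((n:ℝ)-1) * κ * (r x/x)⁻¹)
        * ((r' x * x - r x) / x^2) := by
  have hx1 : x ∈ Set.Ioc (0:ℝ) 1 := memIoc hx
  have hax : 0 < r x := hr.pos x hx1
  have hqx : 0 < r' x := hr.derivPos x hx1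
  have hvx : 0 < r x / x := v_pos hr hx1
  have hn1 := nR_pos hn
  have ht : r' x * x / r x < 1 := (div_lt_one hax).2 hltx
  have ht0 : 0 < r' x * x / r x := div_pos (mul_pos hqx hx.1) hax
  have htp : (r' x * x / r x) ^ (n-1) < 1 := pow_lt_one₀ ht0.le ht (by omega)
  have h1 : 0 < ((n:ℝ)-1) * κ * (r' x / r x) * (1 - (r' x * x / r x) ^ (n-1)) := by
    apply mul_pos (mul_pos (mul_pos hn1 hκ) (div_pos hqx hax))
    linarith
  have h2 : (h'' ((r x/x)^n) * ((n:ℝ) * (r x/x)^(n-1)) + ((n:ℝ)-1) * κ * (r x/x)⁻¹)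
      * ((r' x * x - r x) / x^2) < 0 := by
    have hpp := hh.hpp_pos _ (pow_pos hvx n)
    have hnn : (0:ℝ) < (n:ℝ) := by linarith
    have hb1 : 0 < h'' ((r x/x)^n) * ((n:ℝ) * (r x/x)^(n-1)) :=
      mul_pos hpp (mul_pos hnn (pow_pos hvx _))
    have hb2 : 0 < ((n:ℝ)-1) * κ * (r x/x)⁻¹ :=
      mul_pos (mul_pos hn1 hκ) (inv_pos.2 hvx)
    apply mul_neg_of_pos_of_neg (by linarith)
    apply div_neg_of_neg_of_pos (by linarith) (pow_pos hx.1 2)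
  linarith

/-- sign propagation: if `r < r'R` at `Rb` then on all of `(0, Rb]`. -/
lemma prop_gt (hn : 2 ≤ n) (hκ : 0 < κ) (hh : GoodH h h' h'')
    (hr : ModRadialSol n κ h' r r' r'') {Rb : ℝ} (hRb : Rb ∈ Set.Ioc (0:ℝ) 1)
    (hgt : r Rb < r' Rb * Rb) : ∀ R ∈ Set.Ioc (0:ℝ) Rb, r R < r' R * R := by
  by_contra hcon
  push_neg at hcon
  obtain ⟨R₀, hR₀, hle⟩ := hcon
  have hR₀1 : R₀ ∈ Set.Ioc (0:ℝ) 1 := ⟨hR₀.1, hR₀.2.trans hRb.2⟩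
  have hFR₀ : FF n κ h' r r' R₀ ≤ 0 := by
    rcases eq_or_lt_of_le hle with he|hlt
    · exact le_of_eq (FF_zero hn hr hR₀1 he)
    · exact le_of_lt (FF_neg hn hκ hh hr hR₀1 hlt)
  have hFRb : 0 < FF n κ h' r r' Rb := FF_pos hn hκ hh hr hRb hgt
  have hR₀Rb : R₀ < Rb := by
    rcases lt_or_eq_of_le hR₀.2 with hc|hc
    · exact hc
    · rw [hc] at hle; linarith
  set S := Set.Icc R₀ Rb ∩ (FF n κ h' r r') ⁻¹' (Set.Iic 0) with hS
  have hIccsub : Set.Icc R₀ Rb ⊆ Set.Ioc 0 1 :=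
    fun y hy => ⟨lt_of_lt_of_le hR₀.1 hy.1, le_trans hy.2 hRb.2⟩
  have hclosed : IsClosed S :=
    ContinuousOn.preimage_isClosed_of_isClosed ((FF_contOn hh hr).mono hIccsub)
      isClosed_Icc isClosed_Iic
  have hSne : S.Nonempty := ⟨R₀, ⟨le_rfl, hR₀Rb.le⟩, hFR₀⟩
  have hbdd : BddAbove S := ⟨Rb, fun y hy => hy.1.2⟩
  have haS : sSup S ∈ S := hclosed.csSup_mem hSne hbdd
  set a := sSup S with ha
  have haRb : a < Rb := by
    rcases lt_or_eq_of_le haS.1.2 with hc|hc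
    · exact hc
    · exfalso; have := haS.2; rw [hc] at this; simp only [Set.mem_preimage, Set.mem_Iic] at this
      linarith
  have ha0 : 0 < a := lt_of_lt_of_le hR₀.1 haS.1.1
  have hFpos : ∀ y ∈ Set.Ioc a Rb, 0 < FF n κ h' r r' y := by
    intro y hy
    by_contra hFy
    push_neg at hFy
    have hyS : y ∈ S := ⟨⟨le_trans haS.1.1 hy.1.le, hy.2⟩, hFy⟩
    exact absurd (le_csSup hbdd hyS) (not_le.2 hy.1)
  have hanti : StrictAntiOn (FF n κ h' r r') (Set.Icc a Rb) := by
    apply strictAntiOn_aux ha0 hRb.2 haRb (FF_contOn hh hr)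
      (fun y hy => FF_hasDerivAt hh hr ⟨ha0.trans hy.1, lt_of_lt_of_le hy.2 hRb.2⟩ hn)
    intro y hy
    have hy1 : y ∈ Set.Ioo (0:ℝ) 1 := ⟨ha0.trans hy.1, lt_of_lt_of_le hy.2 hRb.2⟩
    have hgy : r y < r' y * y :=
      (FF_pos_iff hn hκ hh hr (memIoc hy1)).1 (hFpos y ⟨hy.1, hy.2.le⟩)
    exact FFderiv_neg hn hκ hh hr hy1 hgy
  have := hanti (Set.left_mem_Icc.2 haRb.le) (Set.right_mem_Icc.2 haRb.le) haRb
  have haF := haS.2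
  simp only [Set.mem_preimage, Set.mem_Iic] at haF
  linarith

lemma prop_lt (hn : 2 ≤ n) (hκ : 0 < κ) (hh : GoodH h h' h'')
    (hr : ModRadialSol n κ h' r r' r'') {Rb : ℝ} (hRb : Rb ∈ Set.Ioc (0:ℝ) 1)
    (hlt : r' Rb * Rb < r Rb) : ∀ R ∈ Set.Ioc (0:ℝ) Rb, r' R * R < r R := by
  by_contra hcon
  push_neg at hcon
  obtain ⟨R₀, hR₀, hle⟩ := hcon
  have hR₀1 : R₀ ∈ Set.Ioc (0:ℝ) 1 := ⟨hR₀.1, hR₀.2.trans hRb.2⟩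
  have hFR₀ : 0 ≤ FF n κ h' r r' R₀ := by
    rcases eq_or_lt_of_le hle with he|hlt'
    · exact ge_of_eq (FF_zero hn hr hR₀1 he.symm)
    · exact le_of_lt (FF_pos hn hκ hh hr hR₀1 hlt')
  have hFRb : FF n κ h' r r' Rb < 0 := FF_neg hn hκ hh hr hRb hlt
  have hR₀Rb : R₀ < Rb := by
    rcases lt_or_eq_of_le hR₀.2 with hc|hc
    · exact hc
    · rw [hc] at hle; linarith
  set S := Set.Icc R₀ Rb ∩ (FF n κ h' r r') ⁻¹' (Set.Ici 0) with hS
  have hIccsub : Set.Icc R₀ Rb ⊆ Set.Ioc 0 1 :=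
    fun y hy => ⟨lt_of_lt_of_le hR₀.1 hy.1, le_trans hy.2 hRb.2⟩
  have hclosed : IsClosed S :=
    ContinuousOn.preimage_isClosed_of_isClosed ((FF_contOn hh hr).mono hIccsub)
      isClosed_Icc isClosed_Ici
  have hSne : S.Nonempty := ⟨R₀, ⟨le_rfl, hR₀Rb.le⟩, hFR₀⟩
  have hbdd : BddAbove S := ⟨Rb, fun y hy => hy.1.2⟩
  have haS : sSup S ∈ S := hclosed.csSup_mem hSne hbdd
  set a := sSup S with ha
  have haRb : a < Rb := by
    rcases lt_or_eq_of_le haS.1.2 with hc|hc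
    · exact hc
    · exfalso; have := haS.2; rw [hc] at this; simp only [Set.mem_preimage, Set.mem_Ici] at this
      linarith
  have ha0 : 0 < a := lt_of_lt_of_le hR₀.1 haS.1.1
  have hFneg : ∀ y ∈ Set.Ioc a Rb, FF n κ h' r r' y < 0 := by
    intro y hy
    by_contra hFy
    push_neg at hFy
    have hyS : y ∈ S := ⟨⟨le_trans haS.1.1 hy.1.le, hy.2⟩, hFy⟩
    exact absurd (le_csSup hbdd hyS) (not_le.2 hy.1)
  have hmono : StrictMonoOn (FF n κ h' r r') (Set.Icc a Rb) := by
    apply strictMonoOn_aux ha0 hRb.2 haRb (FF_contOn hh hr)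
      (fun y hy => FF_hasDerivAt hh hr ⟨ha0.trans hy.1, lt_of_lt_of_le hy.2 hRb.2⟩ hn)
    intro y hy
    have hy1 : y ∈ Set.Ioo (0:ℝ) 1 := ⟨ha0.trans hy.1, lt_of_lt_of_le hy.2 hRb.2⟩
    have hgy : r' y * y < r y :=
      (FF_neg_iff hn hκ hh hr (memIoc hy1)).1 (hFneg y ⟨hy.1, hy.2.le⟩)
    exact FFderiv_pos hn hκ hh hr hy1 hgy
  have := hmono (Set.left_mem_Icc.2 haRb.le) (Set.right_mem_Icc.2 haRb.le) haRb
  have haF := haS.2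
  simp only [Set.mem_preimage, Set.mem_Ici] at haF
  linarith

end Prop1

section Consequences

variable {n : ℕ} {κ : ℝ} {h h' h'' : ℝ → ℝ} {r r' r'' : ℝ → ℝ} {Rb : ℝ}

/-- v is monotone on `(0,Rb]` when `r < r'R` there -/
lemma v_mono_gt (hr : ModRadialSol n κ h' r r' r'') (hRb : Rb ∈ Set.Ioc (0:ℝ) 1)
    (hsign : ∀ R ∈ Set.Ioc (0:ℝ) Rb, r R < r' R * R) :
    ∀ x ∈ Set.Ioc (0:ℝ) Rb, ∀ y ∈ Set.Ioc (0:ℝ) Rb, x ≤ y → r x / x ≤ r y / y := by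
  intro x hx y hy hxy
  rcases eq_or_lt_of_le hxy with he|hlt
  · rw [he]
  have : StrictMonoOn (fun s => r s / s) (Set.Icc x y) := by
    apply strictMonoOn_aux hx.1 (le_trans hy.2 hRb.2) hlt (v_contOn hr)
      (fun z hz => v_hasDerivAt hr ⟨hx.1.trans hz.1, lt_of_lt_of_le hz.2 (le_trans hy.2 hRb.2)⟩)
    intro z hz
    have hz1 : z ∈ Set.Ioc (0:ℝ) Rb := ⟨hx.1.trans hz.1, le_trans hz.2.le hy.2⟩
    have := hsign z hz1
    apply div_pos (by linarith) (pow_pos (hx.1.trans hz.1) 2)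
  exact (this (Set.left_mem_Icc.2 hxy) (Set.right_mem_Icc.2 hxy) hlt).le

lemma v_anti_lt (hr : ModRadialSol n κ h' r r' r'') (hRb : Rb ∈ Set.Ioc (0:ℝ) 1)
    (hsign : ∀ R ∈ Set.Ioc (0:ℝ) Rb, r' R * R < r R) :
    ∀ x ∈ Set.Ioc (0:ℝ) Rb, ∀ y ∈ Set.Ioc (0:ℝ) Rb, x ≤ y → r y / y ≤ r x / x := by
  intro x hx y hy hxy
  rcases eq_or_lt_of_le hxy with he|hlt
  · rw [he]
  have : StrictAntiOn (fun s => r s / s) (Set.Icc x y) := by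
    apply strictAntiOn_aux hx.1 (le_trans hy.2 hRb.2) hlt (v_contOn hr)
      (fun z hz => v_hasDerivAt hr ⟨hx.1.trans hz.1, lt_of_lt_of_le hz.2 (le_trans hy.2 hRb.2)⟩)
    intro z hz
    have hz1 : z ∈ Set.Ioc (0:ℝ) Rb := ⟨hx.1.trans hz.1, le_trans hz.2.le hy.2⟩
    have := hsign z hz1
    apply div_neg_of_neg_of_pos (by linarith) (pow_pos (hx.1.trans hz.1) 2)
  exact (this (Set.left_mem_Icc.2 hxy) (Set.right_mem_Icc.2 hxy) hlt).le

/-- ψ' sign helper -/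
lemma psi_deriv_neg_val (hn : 2 ≤ n) (hκ : 0 < κ) (hr : ModRadialSol n κ h' r r' r'')
    {x : ℝ} (hx : x ∈ Set.Ioo (0:ℝ) 1) (hgtx : r x < r' x * x) :
    ((n:ℝ)-1) * κ * (r' x / r x) * (1 - (r' x * x / r x) ^ (n-1)) < 0 := by
  have hx1 : x ∈ Set.Ioc (0:ℝ) 1 := memIoc hx
  have hax : 0 < r x := hr.pos x hx1
  have hqx : 0 < r' x := hr.derivPos x hx1
  have hn1 := nR_pos hn
  have ht : 1 < r' x * x / r x := (one_lt_div hax).2 hgtx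
  have htp : 1 < (r' x * x / r x) ^ (n-1) := one_lt_pow₀ ht (by omega)
  apply mul_neg_of_pos_of_neg (mul_pos (mul_pos hn1 hκ) (div_pos hqx hax))
  linarith

lemma psi_deriv_pos_val (hn : 2 ≤ n) (hκ : 0 < κ) (hr : ModRadialSol n κ h' r r' r'')
    {x : ℝ} (hx : x ∈ Set.Ioo (0:ℝ) 1) (hltx : r' x * x < r x) :
    0 < ((n:ℝ)-1) * κ * (r' x / r x) * (1 - (r' x * x / r x) ^ (n-1)) := by
  have hx1 : x ∈ Set.Ioc (0:ℝ) 1 := memIoc hx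
  have hax : 0 < r x := hr.pos x hx1
  have hqx : 0 < r' x := hr.derivPos x hx1
  have hn1 := nR_pos hn
  have ht : r' x * x / r x < 1 := (div_lt_one hax).2 hltx
  have ht0 : 0 < r' x * x / r x := div_pos (mul_pos hqx hx.1) hax
  have htp : (r' x * x / r x) ^ (n-1) < 1 := pow_lt_one₀ ht0.le ht (by omega)
  apply mul_pos (mul_pos (mul_pos hn1 hκ) (div_pos hqx hax))
  linarith

lemma psi_anti_gt (hn : 2 ≤ n) (hκ : 0 < κ) (hh : GoodH h h' h'')
    (hr : ModRadialSol n κ h' r r' r'') (hRb : Rb ∈ Set.Ioc (0:ℝ) 1)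
    (hsign : ∀ R ∈ Set.Ioc (0:ℝ) Rb, r R < r' R * R) :
    ∀ x ∈ Set.Ioc (0:ℝ) Rb, ∀ y ∈ Set.Ioc (0:ℝ) Rb, x ≤ y →
      psiF n κ h' r r' y ≤ psiF n κ h' r r' x := by
  intro x hx y hy hxy
  rcases eq_or_lt_of_le hxy with he|hlt
  · rw [he]
  have : StrictAntiOn (psiF n κ h' r r') (Set.Icc x y) := by
    apply strictAntiOn_aux hx.1 (le_trans hy.2 hRb.2) hlt (psi_contOn hh hr)
      (fun z hz => psi_hasDerivAt hr ⟨hx.1.trans hz.1, lt_of_lt_of_le hz.2 (le_trans hy.2 hRb.2)⟩ hn)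
    intro z hz
    have hz1 : z ∈ Set.Ioo (0:ℝ) 1 :=
      ⟨hx.1.trans hz.1, lt_of_lt_of_le hz.2 (le_trans hy.2 hRb.2)⟩
    exact psi_deriv_neg_val hn hκ hr hz1 (hsign z ⟨hz1.1, le_trans hz.2.le hy.2⟩)
  exact (this (Set.left_mem_Icc.2 hxy) (Set.right_mem_Icc.2 hxy) hlt).le

lemma psi_mono_lt (hn : 2 ≤ n) (hκ : 0 < κ) (hh : GoodH h h' h'')
    (hr : ModRadialSol n κ h' r r' r'') (hRb : Rb ∈ Set.Ioc (0:ℝ) 1)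
    (hsign : ∀ R ∈ Set.Ioc (0:ℝ) Rb, r' R * R < r R) :
    ∀ x ∈ Set.Ioc (0:ℝ) Rb, ∀ y ∈ Set.Ioc (0:ℝ) Rb, x ≤ y →
      psiF n κ h' r r' x ≤ psiF n κ h' r r' y := by
  intro x hx y hy hxy
  rcases eq_or_lt_of_le hxy with he|hlt
  · rw [he]
  have : StrictMonoOn (psiF n κ h' r r') (Set.Icc x y) := by
    apply strictMonoOn_aux hx.1 (le_trans hy.2 hRb.2) hlt (psi_contOn hh hr)
      (fun z hz => psi_hasDerivAt hr ⟨hx.1.trans hz.1, lt_of_lt_of_le hz.2 (le_trans hy.2 hRb.2)⟩ hn)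
    intro z hz
    have hz1 : z ∈ Set.Ioo (0:ℝ) 1 :=
      ⟨hx.1.trans hz.1, lt_of_lt_of_le hz.2 (le_trans hy.2 hRb.2)⟩
    exact psi_deriv_pos_val hn hκ hr hz1 (hsign z ⟨hz1.1, le_trans hz.2.le hy.2⟩)
  exact (this (Set.left_mem_Icc.2 hxy) (Set.right_mem_Icc.2 hxy) hlt).le

lemma FF_anti_gt (hn : 2 ≤ n) (hκ : 0 < κ) (hh : GoodH h h' h'')
    (hr : ModRadialSol n κ h' r r' r'') (hRb : Rb ∈ Set.Ioc (0:ℝ) 1)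
    (hsign : ∀ R ∈ Set.Ioc (0:ℝ) Rb, r R < r' R * R) :
    ∀ x ∈ Set.Ioc (0:ℝ) Rb, ∀ y ∈ Set.Ioc (0:ℝ) Rb, x ≤ y →
      FF n κ h' r r' y ≤ FF n κ h' r r' x := by
  intro x hx y hy hxy
  rcases eq_or_lt_of_le hxy with he|hlt
  · rw [he]
  have : StrictAntiOn (FF n κ h' r r') (Set.Icc x y) := by
    apply strictAntiOn_aux hx.1 (le_trans hy.2 hRb.2) hlt (FF_contOn hh hr)
      (fun z hz => FF_hasDerivAt hh hr ⟨hx.1.trans hz.1, lt_of_lt_of_le hz.2 (le_trans hy.2 hRb.2)⟩ hn)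
    intro z hz
    have hz1 : z ∈ Set.Ioo (0:ℝ) 1 :=
      ⟨hx.1.trans hz.1, lt_of_lt_of_le hz.2 (le_trans hy.2 hRb.2)⟩
    exact FFderiv_neg hn hκ hh hr hz1 (hsign z ⟨hz1.1, le_trans hz.2.le hy.2⟩)
  exact (this (Set.left_mem_Icc.2 hxy) (Set.right_mem_Icc.2 hxy) hlt).le

lemma FF_mono_lt (hn : 2 ≤ n) (hκ : 0 < κ) (hh : GoodH h h' h'')
    (hr : ModRadialSol n κ h' r r' r'') (hRb : Rb ∈ Set.Ioc (0:ℝ) 1)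
    (hsign : ∀ R ∈ Set.Ioc (0:ℝ) Rb, r' R * R < r R) :
    ∀ x ∈ Set.Ioc (0:ℝ) Rb, ∀ y ∈ Set.Ioc (0:ℝ) Rb, x ≤ y →
      FF n κ h' r r' x ≤ FF n κ h' r r' y := by
  intro x hx y hy hxy
  rcases eq_or_lt_of_le hxy with he|hlt
  · rw [he]
  have : StrictMonoOn (FF n κ h' r r') (Set.Icc x y) := by
    apply strictMonoOn_aux hx.1 (le_trans hy.2 hRb.2) hlt (FF_contOn hh hr)
      (fun z hz => FF_hasDerivAt hh hr ⟨hx.1.trans hz.1, lt_of_lt_of_le hz.2 (le_trans hy.2 hRb.2)⟩ hn)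
    intro z hz
    have hz1 : z ∈ Set.Ioo (0:ℝ) 1 :=
      ⟨hx.1.trans hz.1, lt_of_lt_of_le hz.2 (le_trans hy.2 hRb.2)⟩
    exact FFderiv_pos hn hκ hh hr hz1 (hsign z ⟨hz1.1, le_trans hz.2.le hy.2⟩)
  exact (this (Set.left_mem_Icc.2 hxy) (Set.right_mem_Icc.2 hxy) hlt).le

end Consequences

section Seq

variable {n : ℕ} {κ : ℝ} {h h' h'' : ℝ → ℝ}

lemma FF_seq_tendsto (hn : 2 ≤ n) (hh : GoodH h h' h'') {m : ℝ} (hm : 0 < m)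
    {A B : ℕ → ℝ} (hA : Filter.Tendsto A Filter.atTop (nhds m))
    (hB : Filter.Tendsto B Filter.atTop (nhds m)) :
    Filter.Tendsto (fun j => κ * ((A j / B j) ^ (n-1) - 1) + h' (A j * B j ^ (n-1))
      - h' (B j ^ n)) Filter.atTop (nhds 0) := by
  have h1 : Filter.Tendsto (fun j => A j / B j) Filter.atTop (nhds 1) := by
    have := hA.div hB hm.ne'
    rwa [div_self hm.ne'] at this
  have h2 : Filter.Tendsto (fun j => (A j / B j) ^ (n-1)) Filter.atTop (nhds 1) := by
    have := h1.pow (n-1)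
    rwa [one_pow] at this
  have h3 : Filter.Tendsto (fun j => A j * B j ^ (n-1)) Filter.atTop (nhds (m * m ^ (n-1))) :=
    hA.mul (hB.pow (n-1))
  have hmm : (0:ℝ) < m * m ^ (n-1) := mul_pos hm (pow_pos hm _)
  have hc : ContinuousAt h' (m * m ^ (n-1)) := (hh.deriv2 _ hmm).continuousAt
  have h4 : Filter.Tendsto (fun j => h' (A j * B j ^ (n-1))) Filter.atTop
      (nhds (h' (m * m ^ (n-1)))) := hc.tendsto.comp h3
  have hpow : m ^ n = m * m ^ (n-1) := by
    rw [← pow_succ']; congr 1; omega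
  have h5 : Filter.Tendsto (fun j => h' (B j ^ n)) Filter.atTop
      (nhds (h' (m * m ^ (n-1)))) := by
    rw [← hpow]
    exact ((hh.deriv2 _ (pow_pos hm n)).continuousAt.tendsto).comp (hB.pow n)
  have h6 : Filter.Tendsto (fun j => κ * ((A j / B j) ^ (n-1) - 1)) Filter.atTop
      (nhds (κ * (1 - 1))) :=
    (h2.sub (tendsto_const_nhds : Filter.Tendsto (fun _ : ℕ => (1:ℝ)) Filter.atTop
        (nhds 1))).const_mul κ
  have htot := (h6.add h4).sub h5
  have heq : κ * ((1:ℝ) - 1) + h' (m * m ^ (n-1)) - h' (m * m ^ (n-1)) = 0 := by ring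
  rwa [heq] at htot

end Seq

section ZD

variable {n : ℕ} {κ : ℝ} {h h' h'' : ℝ → ℝ} {r r' r'' : ℝ → ℝ}

lemma ZFderiv_nonpos (hn : 2 ≤ n) (hκ : 0 < κ) (hr : ModRadialSol n κ h' r r' r'')
    {y : ℝ} (hy : y ∈ Set.Ioo (0:ℝ) 1) (hgty : r y < r' y * y)
    (hneg : h' (r' y * (r y / y) ^ (n-1)) < 0) :
    ((n:ℝ)-1) * ((r y / y) ^ (n-1) / y) *
      (κ * (1 - (r' y * y / r y) ^ (n-1))
        + h' (r' y * (r y / y) ^ (n-1)) * (r' y * y / r y - 1)) ≤ 0 := by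
  have hy1 : y ∈ Set.Ioc (0:ℝ) 1 := memIoc hy
  have hay : 0 < r y := hr.pos y hy1
  have hvy : 0 < r y / y := v_pos hr hy1
  have hn1 := nR_pos hn
  have ht : 1 < r' y * y / r y := (one_lt_div hay).2 hgty
  have htp : 1 < (r' y * y / r y) ^ (n-1) := one_lt_pow₀ ht (by omega)
  have hi1 : κ * (1 - (r' y * y / r y) ^ (n-1)) < 0 :=
    mul_neg_of_pos_of_neg hκ (by linarith)
  have hi2 : h' (r' y * (r y / y) ^ (n-1)) * (r' y * y / r y - 1) < 0 :=
    mul_neg_of_neg_of_pos hneg (by linarith)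
  have hout : 0 < ((n:ℝ)-1) * ((r y / y) ^ (n-1) / y) :=
    mul_pos hn1 (div_pos (pow_pos hvy _) hy.1)
  exact (mul_neg_of_pos_of_neg hout (by linarith)).le

end ZD

section CaseGT

variable {n : ℕ} {κ : ℝ} {h h' h'' : ℝ → ℝ} {r r' r'' : ℝ → ℝ}

lemma case_gt_zero (hn : 2 ≤ n) (hκ : 0 < κ) (hh : GoodH h h' h'')
    (hr : ModRadialSol n κ h' r r' r'') (hcont : ContinuousOn r (Set.Icc 0 1)) (h0 : r 0 = 0)
    {Rb : ℝ} (hRb : Rb ∈ Set.Ioc (0:ℝ) 1)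
    (hsign : ∀ R ∈ Set.Ioc (0:ℝ) Rb, r R < r' R * R)
    (happ : ∀ ε > (0:ℝ), ∃ s ∈ Set.Ioc (0:ℝ) Rb, r s / s < ε) : False := by
  have hn1 := nR_pos hn
  have hnn : (0:ℝ) < (n:ℝ) := by linarith
  obtain ⟨d₀, hd₀pos, hd₀⟩ := exists_d0 hh
  set c₁ := psiF n κ h' r r' Rb with hc₁
  obtain ⟨ε₁, hε₁, hvε₁⟩ := happ (Real.exp (c₁/(((n:ℝ)-1)*κ) - 1/(n:ℝ) - 1)) (Real.exp_pos _)
  have hε₁1 : ε₁ ∈ Set.Ioc (0:ℝ) 1 := ⟨hε₁.1, hε₁.2.trans hRb.2⟩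
  have hvε₁pos : 0 < r ε₁ / ε₁ := v_pos hr hε₁1
  have hlogε₁ : Real.log (r ε₁ / ε₁) < c₁/(((n:ℝ)-1)*κ) - 1/(n:ℝ) - 1 := by
    have := Real.log_lt_log hvε₁pos hvε₁
    rwa [Real.log_exp] at this
  have hvmono := v_mono_gt hr hRb hsign
  have hupos : ∀ s ∈ Set.Ioc (0:ℝ) ε₁,
      0 < psiF n κ h' r r' s - ((n:ℝ)-1) * κ * (1/(n:ℝ) + Real.log (r s / s)) := by
    intro s hs
    have hs' : s ∈ Set.Ioc (0:ℝ) Rb := ⟨hs.1, hs.2.trans hε₁.2⟩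
    have h1 : c₁ ≤ psiF n κ h' r r' s :=
      psi_anti_gt hn hκ hh hr hRb hsign s hs' Rb ⟨hRb.1, le_rfl⟩ hs'.2
    have h2 : Real.log (r s / s) ≤ Real.log (r ε₁ / ε₁) :=
      Real.log_le_log (v_pos hr ⟨hs.1, hs.2.trans hε₁1.2⟩) (hvmono s hs' ε₁ hε₁ hs.2)
    have hA : ((n:ℝ)-1)*κ*(1/(n:ℝ) + (c₁/(((n:ℝ)-1)*κ) - 1/(n:ℝ) - 1)) = c₁ - ((n:ℝ)-1)*κ := by
      field_simp
      ring
    have h3 := mul_lt_mul_of_pos_left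
      (show (1:ℝ)/(n:ℝ) + Real.log (r s / s) <
        1/(n:ℝ) + (c₁/(((n:ℝ)-1)*κ) - 1/(n:ℝ) - 1) from by linarith)
      (mul_pos hn1 hκ)
    rw [show ((n:ℝ)-1)*κ * (1/(n:ℝ) + (c₁/(((n:ℝ)-1)*κ) - 1/(n:ℝ) - 1)) = c₁ - ((n:ℝ)-1)*κ
      from hA] at h3
    have h4 : 0 < ((n:ℝ)-1)*κ := mul_pos hn1 hκ
    nlinarith
  have hZε₁ : 0 < ZF n κ h' r r' ε₁ := by
    unfold ZF
    exact mul_pos (hupos ε₁ ⟨hε₁.1, le_rfl⟩) (pow_pos hvε₁pos _)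
  set m₁ := min (ZF n κ h' r r' ε₁) (κ * (d₀ / (r ε₁ / ε₁) ^ (n-1)) ^ (n-1)) with hm₁def
  have hm₁pos : 0 < m₁ :=
    lt_min hZε₁ (mul_pos hκ (pow_pos (div_pos hd₀pos (pow_pos hvε₁pos _)) _))
  have hgood : ∀ y ∈ Set.Ioc (0:ℝ) ε₁, 0 ≤ h' (r' y * (r y / y) ^ (n-1)) →
      κ * (d₀ / (r ε₁ / ε₁) ^ (n-1)) ^ (n-1) ≤ κ * (r' y) ^ (n-1) := by
    intro y hy hposy
    have hy1 : y ∈ Set.Ioc (0:ℝ) 1 := ⟨hy.1, hy.2.trans hε₁1.2⟩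
    have hvy : 0 < r y / y := v_pos hr hy1
    have hδd₀ : d₀ ≤ r' y * (r y / y) ^ (n-1) := by
      by_contra hlt'
      push_neg at hlt'
      exact absurd hposy (not_le.2 (hd₀ _ (del_pos hr hy1) hlt'.le))
    have h1 : d₀ / (r y / y) ^ (n-1) ≤ r' y := (div_le_iff₀ (pow_pos hvy _)).2 hδd₀
    have h2 : (r y / y) ^ (n-1) ≤ (r ε₁ / ε₁) ^ (n-1) :=
      pow_le_pow_left₀ hvy.le (hvmono y ⟨hy.1, hy.2.trans hε₁.2⟩ ε₁ hε₁ hy.2) _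
    have h3 : d₀ / (r ε₁ / ε₁) ^ (n-1) ≤ d₀ / (r y / y) ^ (n-1) :=
      div_le_div_of_nonneg_left hd₀pos.le (pow_pos hvy _) h2
    exact mul_le_mul_of_nonneg_left
      (pow_le_pow_left₀ (div_pos hd₀pos (pow_pos hvε₁pos _)).le (h3.trans h1) _) hκ.le
  have hδcont : ContinuousOn (fun y => h' (r' y * (r y / y) ^ (n-1))) (Set.Ioc 0 1) :=
    (hp_contOn hh).comp ((rp_contOn hr).mul ((v_contOn hr).pow _))
      (fun y hy => Set.mem_Ioi.2 (del_pos hr hy))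
  have hclaim : ∀ s ∈ Set.Ioc (0:ℝ) ε₁, m₁ ≤ κ * (r' s) ^ (n-1) := by
    intro s hs
    have hs1 : s ∈ Set.Ioc (0:ℝ) 1 := ⟨hs.1, hs.2.trans hε₁1.2⟩
    have hvs : 0 < r s / s := v_pos hr hs1
    rcases le_or_gt 0 (h' (r' s * (r s / s) ^ (n-1))) with hposs|hnegs
    · exact le_trans (min_le_right _ _) (hgood s hs hposs)
    · have hconc : m₁ ≤ ZF n κ h' r r' s → m₁ ≤ κ * (r' s) ^ (n-1) := by
        intro hZ
        rw [ZF_eq hr hs1] at hZ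
        have hneg2 := mul_neg_of_pos_of_neg (pow_pos hvs (n-1)) hnegs
        linarith
      apply hconc
      rcases eq_or_lt_of_le hs.2 with hse|hslt
      · rw [hse]
        exact min_le_left _ _
      · set T := Set.Icc s ε₁ ∩ (fun y => h' (r' y * (r y / y) ^ (n-1))) ⁻¹' Set.Ici 0 with hT
        have hIccsub : Set.Icc s ε₁ ⊆ Set.Ioc 0 1 :=
          fun y hy => ⟨hs.1.trans_le hy.1, hy.2.trans hε₁1.2⟩
        have hTclosed : IsClosed T :=
          ContinuousOn.preimage_isClosed_of_isClosed (hδcont.mono hIccsub)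
            isClosed_Icc isClosed_Ici
        by_cases hTne : T.Nonempty
        · set b := sInf T with hb
          have hbT : b ∈ T := hTclosed.csInf_mem hTne ⟨s, fun y hy => hy.1.1⟩
          have hbsne : s ≠ b := by
            intro he
            rw [← he] at hbT
            exact absurd hbT.2 (not_le.2 hnegs)
          have hbs : s < b := lt_of_le_of_ne hbT.1.1 hbsne
          have hbefore : ∀ y ∈ Set.Ico s b, h' (r' y * (r y / y) ^ (n-1)) < 0 := by
            intro y hy
            by_contra hge
            push_neg at hge
            have hyT : y ∈ T := ⟨⟨hy.1, hy.2.le.trans hbT.1.2⟩, hge⟩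
            exact absurd (csInf_le ⟨s, fun z hz => hz.1.1⟩ hyT) (not_le.2 hy.2)
          have hb1' : b ≤ 1 := hbT.1.2.trans hε₁1.2
          have hZanti : AntitoneOn (ZF n κ h' r r') (Set.Icc s b) := by
            apply antitoneOn_aux hs.1 hb1' hbs (ZF_contOn hh hr)
              (fun y hy => ZF_hasDerivAt hh hr ⟨hs.1.trans hy.1, lt_of_lt_of_le hy.2 hb1'⟩ hn)
            intro y hy
            have hy1 : y ∈ Set.Ioo (0:ℝ) 1 := ⟨hs.1.trans hy.1, lt_of_lt_of_le hy.2 hb1'⟩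
            exact ZFderiv_nonpos hn hκ hr hy1
              (hsign y ⟨hy1.1, (hy.2.le.trans hbT.1.2).trans hε₁.2⟩)
              (hbefore y ⟨hy.1.le, hy.2⟩)
          have hZsb : ZF n κ h' r r' b ≤ ZF n κ h' r r' s :=
            hZanti (Set.left_mem_Icc.2 hbs.le) (Set.right_mem_Icc.2 hbs.le) hbs.le
          have hbmem : b ∈ Set.Ioc (0:ℝ) ε₁ := ⟨hs.1.trans hbs, hbT.1.2⟩
          have hbm1 : b ∈ Set.Ioc (0:ℝ) 1 := ⟨hbmem.1, hbmem.2.trans hε₁1.2⟩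
          have hgb := hgood b hbmem hbT.2
          have hZb : κ * (d₀ / (r ε₁ / ε₁) ^ (n-1)) ^ (n-1) ≤ ZF n κ h' r r' b := by
            rw [ZF_eq hr hbm1]
            have := mul_nonneg (pow_pos (v_pos hr hbm1) (n-1)).le hbT.2
            linarith
          have := min_le_right (ZF n κ h' r r' ε₁) (κ * (d₀ / (r ε₁ / ε₁) ^ (n-1)) ^ (n-1))
          linarith
        · have hallneg : ∀ y ∈ Set.Icc s ε₁, h' (r' y * (r y / y) ^ (n-1)) < 0 := by
            intro y hy
            by_contra hge
            push_neg at hge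
            exact hTne ⟨y, hy, hge⟩
          have hZanti : AntitoneOn (ZF n κ h' r r') (Set.Icc s ε₁) := by
            apply antitoneOn_aux hs.1 hε₁1.2 hslt (ZF_contOn hh hr)
              (fun y hy => ZF_hasDerivAt hh hr ⟨hs.1.trans hy.1, lt_of_lt_of_le hy.2 hε₁1.2⟩ hn)
            intro y hy
            have hy1 : y ∈ Set.Ioo (0:ℝ) 1 := ⟨hs.1.trans hy.1, lt_of_lt_of_le hy.2 hε₁1.2⟩
            exact ZFderiv_nonpos hn hκ hr hy1
              (hsign y ⟨hy1.1, hy.2.le.trans hε₁.2⟩)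
              (hallneg y ⟨hy.1.le, hy.2.le⟩)
          have hZsε := hZanti (Set.left_mem_Icc.2 hslt.le) (Set.right_mem_Icc.2 hslt.le) hslt.le
          have := min_le_left (ZF n κ h' r r' ε₁) (κ * (d₀ / (r ε₁ / ε₁) ^ (n-1)) ^ (n-1))
          linarith
  set τ := min (r ε₁ / ε₁) (min 1 (m₁ / κ)) with hτ
  have hτpos : 0 < τ := lt_min hvε₁pos (lt_min one_pos (div_pos hm₁pos hκ))
  obtain ⟨t, ht, hvt⟩ := happ τ hτpos
  have ht1 : t ∈ Set.Ioc (0:ℝ) 1 := ⟨ht.1, ht.2.trans hRb.2⟩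
  have htε₁ : t ≤ ε₁ := by
    by_contra hgtt
    push_neg at hgtt
    have h1 := hvmono ε₁ hε₁ t ht hgtt.le
    have h2 : r t / t < r ε₁ / ε₁ := lt_of_lt_of_le hvt (min_le_left _ _)
    linarith
  obtain ⟨ξ, hξ, hξv⟩ := mvt_point hr hcont h0 ht1
  have hξmem : ξ ∈ Set.Ioc (0:ℝ) ε₁ := ⟨hξ.1, hξ.2.le.trans htε₁⟩
  have hcl := hclaim ξ hξmem
  rw [hξv] at hcl
  have hvt1 : r t / t < 1 := lt_of_lt_of_le hvt ((min_le_right _ _).trans (min_le_left _ _))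
  have hvtm : r t / t < m₁ / κ := lt_of_lt_of_le hvt ((min_le_right _ _).trans (min_le_right _ _))
  have hvtpos : 0 < r t / t := v_pos hr ht1
  have hp : (r t / t) ^ (n-1) ≤ r t / t := pow_le_of_le_one hvtpos.le hvt1.le (by omega)
  have hfin : κ * (r t / t) ^ (n-1) < m₁ := by
    have e1 : κ * (r t / t) ^ (n-1) ≤ κ * (r t / t) := mul_le_mul_of_nonneg_left hp hκ.le
    have e2 : κ * (r t / t) < κ * (m₁ / κ) := mul_lt_mul_of_pos_left hvtm hκ
    have e3 : κ * (m₁ / κ) = m₁ := by field_simp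
    linarith
  linarith

lemma case_gt (hn : 2 ≤ n) (hκ : 0 < κ) (hh : GoodH h h' h'')
    (hr : ModRadialSol n κ h' r r' r'') (hcont : ContinuousOn r (Set.Icc 0 1)) (h0 : r 0 = 0)
    {Rb : ℝ} (hRb : Rb ∈ Set.Ioc (0:ℝ) 1) (hgt : r Rb < r' Rb * Rb) : False := by
  have hsign := prop_gt hn hκ hh hr hRb hgt
  have hRbIoc : Rb ∈ Set.Ioc (0:ℝ) Rb := ⟨hRb.1, le_rfl⟩
  set V := (fun s => r s / s) '' Set.Ioc 0 Rb with hV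
  have hVne : V.Nonempty := ⟨_, Set.mem_image_of_mem _ hRbIoc⟩
  have hVbdd : BddBelow V := by
    refine ⟨0, ?_⟩
    rintro y ⟨s, hs, rfl⟩
    exact (v_pos hr ⟨hs.1, hs.2.trans hRb.2⟩).le
  set m := sInf V with hm
  have hlb : ∀ s ∈ Set.Ioc (0:ℝ) Rb, m ≤ r s / s :=
    fun s hs => csInf_le hVbdd (Set.mem_image_of_mem _ hs)
  have hm0 : 0 ≤ m := by
    apply le_csInf hVne
    rintro y ⟨s, hs, rfl⟩
    exact (v_pos hr ⟨hs.1, hs.2.trans hRb.2⟩).le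
  have happ : ∀ ε > (0:ℝ), ∃ s ∈ Set.Ioc (0:ℝ) Rb, r s / s < m + ε := by
    intro ε hε
    obtain ⟨y, hyV, hy⟩ := exists_lt_of_csInf_lt hVne (show m < m + ε by linarith)
    obtain ⟨s, hs, rfl⟩ := hyV
    exact ⟨s, hs, hy⟩
  rcases eq_or_lt_of_le hm0 with hm00|hmpos
  · apply case_gt_zero hn hκ hh hr hcont h0 hRb hsign
    intro ε hε
    obtain ⟨s, hs, hlt⟩ := happ ε hε
    exact ⟨s, hs, by rw [← hm00] at hlt; simpa using hlt⟩
  · have hch : ∀ j : ℕ, ∃ s ∈ Set.Ioc (0:ℝ) Rb, r s / s < m + 1/((j:ℝ)+1) :=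
      fun j => happ _ (by positivity)
    choose Rs hRs hRsv using hch
    have hRs1 : ∀ j, Rs j ∈ Set.Ioc (0:ℝ) 1 := fun j => ⟨(hRs j).1, (hRs j).2.trans hRb.2⟩
    choose ξ hξ hξv using fun j => mvt_point hr hcont h0 (hRs1 j)
    have hξmem : ∀ j, ξ j ∈ Set.Ioc (0:ℝ) Rb := fun j => ⟨(hξ j).1, (hξ j).2.le.trans (hRs j).2⟩
    have hξ1 : ∀ j, ξ j ∈ Set.Ioc (0:ℝ) 1 := fun j => ⟨(hξmem j).1, (hξmem j).2.trans hRb.2⟩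
    have hvmono := v_mono_gt hr hRb hsign
    have hBle : ∀ j, r (ξ j) / (ξ j) ≤ r (Rs j) / (Rs j) :=
      fun j => hvmono _ (hξmem j) _ (hRs j) (hξ j).2.le
    have hlim : Filter.Tendsto (fun j : ℕ => m + 1/((j:ℝ)+1)) Filter.atTop (nhds m) := by
      have := (tendsto_const_nhds : Filter.Tendsto (fun _ : ℕ => m) Filter.atTop (nhds m)).add
        tendsto_one_div_add_atTop_nhds_zero_nat
      simpa using this
    have hA : Filter.Tendsto (fun j => r (Rs j) / (Rs j)) Filter.atTop (nhds m) :=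
      tendsto_of_tendsto_of_tendsto_of_le_of_le tendsto_const_nhds hlim
        (fun j => hlb _ (hRs j)) (fun j => (hRsv j).le)
    have hB : Filter.Tendsto (fun j => r (ξ j) / (ξ j)) Filter.atTop (nhds m) :=
      tendsto_of_tendsto_of_tendsto_of_le_of_le tendsto_const_nhds hlim
        (fun j => hlb _ (hξmem j)) (fun j => (hBle j).trans (hRsv j).le)
    have hFRb : 0 < FF n κ h' r r' Rb := FF_pos hn hκ hh hr hRb hgt
    have hFξ : ∀ j, FF n κ h' r r' Rb ≤ FF n κ h' r r' (ξ j) :=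
      fun j => FF_anti_gt hn hκ hh hr hRb hsign _ (hξmem j) Rb hRbIoc (hξmem j).2
    have hFlim : Filter.Tendsto (fun j => FF n κ h' r r' (ξ j)) Filter.atTop (nhds 0) := by
      have htend := FF_seq_tendsto (κ := κ) hn hh hmpos hA hB
      apply htend.congr
      intro j
      rw [FF_eq hr (hξ1 j), hξv j]
    have := ge_of_tendsto' hFlim hFξ
    linarith

end CaseGT

section CaseLT

variable {n : ℕ} {κ : ℝ} {h h' h'' : ℝ → ℝ} {r r' r'' : ℝ → ℝ}

lemma case_lt (hn : 2 ≤ n) (hκ : 0 < κ) (hh : GoodH h h' h'')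
    (hr : ModRadialSol n κ h' r r' r'') (hcont : ContinuousOn r (Set.Icc 0 1)) (h0 : r 0 = 0)
    {Rb : ℝ} (hRb : Rb ∈ Set.Ioc (0:ℝ) 1) (hlt : r' Rb * Rb < r Rb) : False := by
  have hsign := prop_lt hn hκ hh hr hRb hlt
  have hRbIoc : Rb ∈ Set.Ioc (0:ℝ) Rb := ⟨hRb.1, le_rfl⟩
  have hvanti := v_anti_lt hr hRb hsign
  have hvRb : 0 < r Rb / Rb := v_pos hr hRb
  have hn1 := nR_pos hn
  have hnn : (0:ℝ) < (n:ℝ) := by linarith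
  by_cases hbdd : BddAbove ((fun s => r s / s) '' Set.Ioc 0 Rb)
  · set M := sSup ((fun s => r s / s) '' Set.Ioc 0 Rb) with hM
    have hVne : ((fun s => r s / s) '' Set.Ioc 0 Rb).Nonempty :=
      ⟨_, Set.mem_image_of_mem _ hRbIoc⟩
    have hub : ∀ s ∈ Set.Ioc (0:ℝ) Rb, r s / s ≤ M :=
      fun s hs => le_csSup hbdd (Set.mem_image_of_mem _ hs)
    have hMpos : 0 < M := lt_of_lt_of_le hvRb (hub Rb hRbIoc)
    have happ : ∀ j : ℕ, ∃ s ∈ Set.Ioc (0:ℝ) Rb, M - 1/((j:ℝ)+1) < r s / s := by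
      intro j
      obtain ⟨y, hyV, hy⟩ := exists_lt_of_lt_csSup hVne
        (show M - 1/((j:ℝ)+1) < M from sub_lt_self _ (by positivity))
      obtain ⟨s, hs, rfl⟩ := hyV
      exact ⟨s, hs, hy⟩
    choose Rs hRs hRsv using happ
    have hRs1 : ∀ j, Rs j ∈ Set.Ioc (0:ℝ) 1 := fun j => ⟨(hRs j).1, (hRs j).2.trans hRb.2⟩
    choose ξ hξ hξv using fun j => mvt_point hr hcont h0 (hRs1 j)
    have hξmem : ∀ j, ξ j ∈ Set.Ioc (0:ℝ) Rb := fun j => ⟨(hξ j).1, (hξ j).2.le.trans (hRs j).2⟩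
    have hξ1 : ∀ j, ξ j ∈ Set.Ioc (0:ℝ) 1 := fun j => ⟨(hξmem j).1, (hξmem j).2.trans hRb.2⟩
    have hBge : ∀ j, r (Rs j) / (Rs j) ≤ r (ξ j) / (ξ j) :=
      fun j => hvanti _ (hξmem j) _ (hRs j) (hξ j).2.le
    have hlim : Filter.Tendsto (fun j : ℕ => M - 1/((j:ℝ)+1)) Filter.atTop (nhds M) := by
      have := (tendsto_const_nhds : Filter.Tendsto (fun _ : ℕ => M) Filter.atTop (nhds M)).sub
        tendsto_one_div_add_atTop_nhds_zero_nat
      simpa using this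
    have hA : Filter.Tendsto (fun j => r (Rs j) / (Rs j)) Filter.atTop (nhds M) :=
      tendsto_of_tendsto_of_tendsto_of_le_of_le hlim tendsto_const_nhds
        (fun j => (hRsv j).le) (fun j => hub _ (hRs j))
    have hB : Filter.Tendsto (fun j => r (ξ j) / (ξ j)) Filter.atTop (nhds M) :=
      tendsto_of_tendsto_of_tendsto_of_le_of_le hlim tendsto_const_nhds
        (fun j => ((hRsv j).le).trans (hBge j)) (fun j => hub _ (hξmem j))
    have hFRb : FF n κ h' r r' Rb < 0 := FF_neg hn hκ hh hr hRb hlt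
    have hFξ : ∀ j, FF n κ h' r r' (ξ j) ≤ FF n κ h' r r' Rb :=
      fun j => FF_mono_lt hn hκ hh hr hRb hsign _ (hξmem j) Rb hRbIoc (hξmem j).2
    have hFlim : Filter.Tendsto (fun j => FF n κ h' r r' (ξ j)) Filter.atTop (nhds 0) := by
      have htend := FF_seq_tendsto (κ := κ) hn hh hMpos hA hB
      apply htend.congr
      intro j
      rw [FF_eq hr (hξ1 j), hξv j]
    have := le_of_tendsto' hFlim hFξ
    linarith
  · set c₁ := psiF n κ h' r r' Rb with hc₁
    have hψ : ∀ s ∈ Set.Ioc (0:ℝ) Rb, psiF n κ h' r r' s ≤ c₁ :=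
      fun s hs => psi_mono_lt hn hκ hh hr hRb hsign s hs Rb hRbIoc hs.2
    set d₁ := (r Rb / Rb) ^ n with hd₁
    have hd₁pos : 0 < d₁ := pow_pos hvRb n
    obtain ⟨y, hyV, hy⟩ := not_bddAbove_iff.1 hbdd
      (Real.exp ((c₁ - h' d₁)/(((n:ℝ)-1)*κ) - 1/(n:ℝ) + 1))
    obtain ⟨R', hR', rfl⟩ := hyV
    have hR'1 : R' ∈ Set.Ioc (0:ℝ) 1 := ⟨hR'.1, hR'.2.trans hRb.2⟩
    have hδsmall : ∀ s ∈ Set.Ioc (0:ℝ) R', r' s * (r s / s) ^ (n-1) < d₁ := by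
      intro s hs
      have hs' : s ∈ Set.Ioc (0:ℝ) Rb := ⟨hs.1, hs.2.trans hR'.2⟩
      have hs1 : s ∈ Set.Ioc (0:ℝ) 1 := ⟨hs.1, hs'.2.trans hRb.2⟩
      have hvs : 0 < r s / s := v_pos hr hs1
      have hvub : r R' / R' ≤ r s / s := hvanti s hs' R' hR' hs.2
      have hlog : (c₁ - h' d₁)/(((n:ℝ)-1)*κ) - 1/(n:ℝ) + 1 < Real.log (r s / s) := by
        have hx := Real.log_lt_log (Real.exp_pos _) (lt_of_lt_of_le hy hvub)
        rwa [Real.log_exp] at hx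
      have hψs := hψ s hs'
      unfold psiF THat at hψs
      have hpos1 : 0 ≤ κ * (r' s / (r s / s)) ^ (n-1) :=
        mul_nonneg hκ.le (pow_nonneg (div_nonneg (hr.derivPos s hs1).le hvs.le) _)
      have hAi : ((n:ℝ)-1)*κ*((c₁ - h' d₁)/(((n:ℝ)-1)*κ) - 1/(n:ℝ) + 1)
          = (c₁ - h' d₁) - ((n:ℝ)-1)*κ/(n:ℝ) + ((n:ℝ)-1)*κ := by
        field_simp
      have h3 := mul_lt_mul_of_pos_left hlog (mul_pos hn1 hκ)
      rw [hAi] at h3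
      have hsplit : ((n:ℝ)-1)*κ*(1/(n:ℝ) + Real.log (r s/s))
          = ((n:ℝ)-1)*κ/(n:ℝ) + ((n:ℝ)-1)*κ*Real.log (r s/s) := by ring
      rw [hsplit] at hψs
      have hfinal : h' (r' s * (r s / s) ^ (n-1)) < h' d₁ := by
        have haa : 0 < ((n:ℝ)-1)*κ := mul_pos hn1 hκ
        linarith
      by_contra hge
      push_neg at hge
      have := (hpStrictMono hh).monotoneOn (Set.mem_Ioi.2 hd₁pos)
        (Set.mem_Ioi.2 (del_pos hr hs1)) hge
      linarith
    obtain ⟨ξ, hξ, hξv⟩ := mvt_point hr hcont h0 hR'1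
    have hξ' : ξ ∈ Set.Ioc (0:ℝ) R' := ⟨hξ.1, hξ.2.le⟩
    have hξ1 : ξ ∈ Set.Ioc (0:ℝ) 1 := ⟨hξ.1, hξ'.2.trans hR'1.2⟩
    have h1 := hδsmall ξ hξ'
    rw [hξv] at h1
    have h2 : r Rb / Rb ≤ r R' / R' := hvanti R' hR' Rb hRbIoc hR'.2
    have h3 : r Rb / Rb ≤ r ξ / ξ :=
      hvanti ξ ⟨hξ.1, hξ'.2.trans hR'.2⟩ Rb hRbIoc (hξ'.2.trans hR'.2)
    have h4 : d₁ ≤ r R' / R' * (r ξ / ξ) ^ (n-1) := by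
      have e : d₁ = (r Rb / Rb) * (r Rb / Rb) ^ (n-1) := by
        rw [hd₁, ← pow_succ']
        congr 1
        omega
      rw [e]
      exact mul_le_mul h2 (pow_le_pow_left₀ hvRb.le h3 _) (pow_nonneg hvRb.le _)
        (v_pos hr hR'1).le
    linarith

end CaseLT

section Key

variable {n : ℕ} {κ : ℝ} {h h' h'' : ℝ → ℝ} {r r' r'' : ℝ → ℝ}

lemma key_eq (hn : 2 ≤ n) (hκ : 0 < κ) (hh : GoodH h h' h'')
    (hr : ModRadialSol n κ h' r r' r'') (hcont : ContinuousOn r (Set.Icc 0 1))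
    (h0 : r 0 = 0) : ∀ R ∈ Set.Ioc (0:ℝ) 1, r' R * R = r R := by
  intro R hR
  by_contra hne
  rcases lt_or_gt_of_ne hne with hlt'|hgt'
  · exact case_lt hn hκ hh hr hcont h0 hR hlt'
  · exact case_gt hn hκ hh hr hcont h0 hR hgt'

end Key

end Stmt14


/-- a solution of the modified equilibrium equation with `r(0) = 0`
and `r(1) = λ` is the homogeneous deformation `r(R) = λR`. -/
theorem stmt14 (n : ℕ) (hn : 2 ≤ n) (κ : ℝ) (hκ : 0 < κ)
    (h h' h'' : ℝ → ℝ) (hh : GoodH h h' h'') (lam : ℝ)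
    (r r' r'' : ℝ → ℝ) (hr : ModRadialSol n κ h' r r' r'')
    (hcont : ContinuousOn r (Set.Icc 0 1)) (h0 : r 0 = 0) (hbc : r 1 = lam) :
    ∀ R ∈ Set.Icc (0:ℝ) 1, r R = lam * R := by
  have hkey := Stmt14.key_eq hn hκ hh hr hcont h0
  have hvconst : ∀ R ∈ Set.Ioc (0:ℝ) 1, r R / R = r 1 / 1 := by
    intro R hR
    rcases eq_or_lt_of_le hR.2 with he|hlt
    · rw [he]
    · have hd : ∀ z ∈ Set.Ioo R 1, HasDerivAt (fun s => r s / s) ((r' z * z - r z)/z^2) z :=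
        fun z hz => Stmt14.v_hasDerivAt hr ⟨hR.1.trans hz.1, hz.2⟩
      have hzero : ∀ z ∈ Set.Ioo R 1, (r' z * z - r z)/z^2 = 0 := by
        intro z hz
        rw [hkey z ⟨hR.1.trans hz.1, hz.2.le⟩]
        simp
      have hanti := Stmt14.antitoneOn_aux hR.1 le_rfl hlt (Stmt14.v_contOn hr) hd
        (fun z hz => le_of_eq (hzero z hz))
      have hmono := Stmt14.monotoneOn_aux hR.1 le_rfl hlt (Stmt14.v_contOn hr) hd
        (fun z hz => ge_of_eq (hzero z hz))
      have l1 := hanti (Set.left_mem_Icc.2 hlt.le) (Set.right_mem_Icc.2 hlt.le) hlt.le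
      have l2 := hmono (Set.left_mem_Icc.2 hlt.le) (Set.right_mem_Icc.2 hlt.le) hlt.le
      exact le_antisymm l2 l1
  intro R hR
  rcases eq_or_lt_of_le hR.1 with he|hpos
  · rw [← he, h0]
    ring
  · have hvc := hvconst R ⟨hpos, hR.2⟩
    rw [hbc, div_one] at hvc
    field_simp at hvc
    linarith [hvc]


end
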